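/- Let T(t) denote the measure assigned by the standard Gaussian distribution on ℝ (mean 0, variance 1) to the open half-line (t, ∞). Then the ratio ((1/2)·log(1 + t²)) / (log(log(1/T(t)))) tends to 1/2 as t tends to +∞. Consequently, the minimal Gaussian–Gaussian KL divergence (1/2)·log(1 + (Φ⁻¹(π))²) needed to realize spike probability π grows only double-logarithmically, namely as Θ(log log(1/π)), as π → 0. -/

import Mathlib

set_option maxHeartbeats 1000000

open MeasureTheory ProbabilityTheory Set Filter Real

noncomputable def gI (t : ℝ) : ℝ := ∫ x in Ioi t, rexp (-x ^ 2 / 2)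

lemma gI_integrable (t : ℝ) : IntegrableOn (fun x : ℝ => rexp (-x ^ 2 / 2)) (Ioi t) := by
  have := (integrable_exp_neg_mul_sq (b := 1/2) (by norm_num)).integrableOn (s := Ioi t)
  refine this.congr_fun (fun x _ => by ring_nf) measurableSet_Ioi

lemma hasDeriv_aux (x : ℝ) : HasDerivAt (fun y : ℝ => -rexp (-y ^ 2 / 2)) (x * rexp (-x ^ 2 / 2)) x := by
  have h1 : HasDerivAt (fun y : ℝ => -y ^ 2 / 2) (-x) x := by
    have := ((hasDerivAt_pow 2 x).neg).div_const 2
    simpa using this.congr_deriv (by ring)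
  have h2 := (h1.exp).neg
  exact h2.congr_deriv (by ring)

lemma gI_tendsto_zero : Tendsto (fun y : ℝ => rexp (-y ^ 2 / 2)) atTop (nhds 0) := by
  have h1 : Tendsto (fun y : ℝ => y ^ 2 / 2) atTop atTop :=
    (tendsto_pow_atTop two_ne_zero).atTop_div_const (by norm_num)
  have h : Tendsto (fun y : ℝ => -(y ^ 2 / 2)) atTop atBot := tendsto_neg_atTop_atBot.comp h1
  have h2 := Real.tendsto_exp_atBot.comp h
  exact h2.congr fun y => by simp [Function.comp, neg_div]

lemma gI_upper {t : ℝ} (ht : 1 ≤ t) : gI t ≤ rexp (-t ^ 2 / 2) := by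
  have hderiv : ∀ x ∈ Ici t, HasDerivAt (fun y : ℝ => -rexp (-y ^ 2 / 2)) (x * rexp (-x ^ 2 / 2)) x :=
    fun x _ => hasDeriv_aux x
  have hpos : ∀ x ∈ Ioi t, 0 ≤ x * rexp (-x ^ 2 / 2) := fun x hx =>
    mul_nonneg (by linarith [mem_Ioi.mp hx]) (exp_nonneg _)
  have htend : Tendsto (fun y : ℝ => -rexp (-y ^ 2 / 2)) atTop (nhds 0) := by
    simpa using gI_tendsto_zero.neg
  have hint := integral_Ioi_of_hasDerivAt_of_nonneg' hderiv hpos htend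
  have hInt : IntegrableOn (fun x : ℝ => x * rexp (-x ^ 2 / 2)) (Ioi t) :=
    integrableOn_Ioi_deriv_of_nonneg' hderiv hpos htend
  have hmono : gI t ≤ ∫ x in Ioi t, x * rexp (-x ^ 2 / 2) := by
    apply setIntegral_mono_on (gI_integrable t) hInt measurableSet_Ioi
    intro x hx
    have hx1 : 1 ≤ x := le_of_lt (lt_of_le_of_lt ht (mem_Ioi.mp hx))
    nlinarith [exp_pos (-x ^ 2 / 2)]
  calc gI t ≤ ∫ x in Ioi t, x * rexp (-x ^ 2 / 2) := hmono
    _ = 0 - -rexp (-t ^ 2 / 2) := hint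
    _ = rexp (-t ^ 2 / 2) := by ring

lemma gI_lower {t : ℝ} (ht : 1 ≤ t) : rexp (-(t+1) ^ 2 / 2) ≤ gI t := by
  have h1 : rexp (-(t+1) ^ 2 / 2) ≤ ∫ x in Ioc t (t+1), rexp (-x ^ 2 / 2) := by
    have := setIntegral_mono_on (f := fun _ : ℝ => rexp (-(t+1) ^ 2 / 2))
      (g := fun x : ℝ => rexp (-x ^ 2 / 2)) (s := Ioc t (t+1)) (μ := volume)
      (integrableOn_const (by simp))
      ((gI_integrable t).mono_set Ioc_subset_Ioi_self)
      measurableSet_Ioc ?_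
    · calc rexp (-(t+1) ^ 2 / 2)
          = (volume (Ioc t (t+1))).toReal • rexp (-(t+1) ^ 2 / 2) := by
            simp [Real.volume_Ioc]
        _ = ∫ _ in Ioc t (t+1), rexp (-(t+1) ^ 2 / 2) := (setIntegral_const _).symm
        _ ≤ _ := this
    · intro x hx
      apply exp_le_exp.mpr
      have h1 := hx.1; have h2 := hx.2
      nlinarith
  refine h1.trans ?_
  apply setIntegral_mono_set (gI_integrable t)
    (Eventually.of_forall fun x => exp_nonneg _)
    (HasSubset.Subset.eventuallyLE Ioc_subset_Ioi_self)

lemma T_eq (t : ℝ) : (gaussianReal 0 1 (Ioi t)).toReal = (Real.sqrt (2 * π))⁻¹ * gI t := by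
  rw [gaussianReal_apply_eq_integral 0 (by norm_num) (Ioi t)]
  rw [ENNReal.toReal_ofReal (integral_nonneg fun x => gaussianPDFReal_nonneg _ _ _)]
  rw [gI, ← integral_const_mul]
  congr 1 with x
  simp [gaussianPDFReal]

lemma L_bounds {t : ℝ} (ht : 3 ≤ t) :
    t ^ 2 / 2 ≤ Real.log (1 / (gaussianReal 0 1 (Ioi t)).toReal) ∧
      Real.log (1 / (gaussianReal 0 1 (Ioi t)).toReal) ≤ 2 * t ^ 2 := by
  have h1t : (1:ℝ) ≤ t := by linarith
  have hs : (1:ℝ) ≤ Real.sqrt (2 * π) := by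
    rw [show (1:ℝ) = Real.sqrt 1 by simp]
    exact Real.sqrt_le_sqrt (by nlinarith [Real.pi_gt_three])
  have hs3 : Real.sqrt (2 * π) ≤ 3 := by
    rw [show (3:ℝ) = Real.sqrt 9 by rw [show (9:ℝ) = 3 ^ 2 by norm_num, Real.sqrt_sq]; norm_num]
    exact Real.sqrt_le_sqrt (by nlinarith [Real.pi_le_four])
  have hc : 0 < (Real.sqrt (2 * π))⁻¹ := by positivity
  set c := (Real.sqrt (2 * π))⁻¹ with hcdef
  set T := (gaussianReal 0 1 (Ioi t)).toReal with hT
  have hTub : T ≤ rexp (-t ^ 2 / 2) := by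
    rw [hT, T_eq]
    calc c * gI t ≤ c * rexp (-t ^ 2 / 2) := by
          exact mul_le_mul_of_nonneg_left (gI_upper h1t) hc.le
      _ ≤ 1 * rexp (-t ^ 2 / 2) := by
          apply mul_le_mul_of_nonneg_right _ (exp_nonneg _)
          exact inv_le_one_of_one_le₀ hs
      _ = rexp (-t ^ 2 / 2) := one_mul _
  have hTlb : c * rexp (-(t+1) ^ 2 / 2) ≤ T := by
    rw [hT, T_eq]
    exact mul_le_mul_of_nonneg_left (gI_lower h1t) hc.le
  have hTpos : 0 < T := lt_of_lt_of_le (by positivity) hTlb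
  have hlogrw : Real.log (1 / T) = -Real.log T := by rw [one_div, Real.log_inv]
  constructor
  · rw [hlogrw]
    have := Real.log_le_log hTpos hTub
    rw [Real.log_exp] at this
    linarith
  · rw [hlogrw]
    have h2 := Real.log_le_log (by positivity) hTlb
    rw [Real.log_mul (ne_of_gt hc) (exp_ne_zero _), Real.log_exp] at h2
    have hlc : -Real.log c ≤ 2 := by
      rw [hcdef, Real.log_inv, neg_neg]
      calc Real.log (Real.sqrt (2*π)) ≤ Real.log 3 := Real.log_le_log (by positivity) hs3
        _ ≤ 3 - 1 := Real.log_le_sub_one_of_pos (by norm_num)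
        _ = 2 := by norm_num
    nlinarith

theorem min_gaussian_kl_double_log_asymptotic :
    Filter.Tendsto
      (fun t : ℝ =>
        ((1 / 2) * Real.log (1 + t ^ 2)) /
          Real.log (Real.log (1 / (gaussianReal 0 1 (Ioi t)).toReal)))
      Filter.atTop (nhds (1 / 2)) := by
  set L := fun t : ℝ => Real.log (1 / (gaussianReal 0 1 (Ioi t)).toReal) with hL
  set g := fun t : ℝ => Real.log (L t) with hg
  set f := fun t : ℝ => (1 / 2) * Real.log (1 + t ^ 2) with hf
  -- g / log → 2
  have hg2 : Tendsto (fun t => g t / Real.log t) atTop (nhds 2) := by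
    have hlo : Tendsto (fun t : ℝ => 2 - Real.log 2 / Real.log t) atTop (nhds 2) := by
      have := tendsto_const_nhds (x := Real.log 2) (f := atTop (α := ℝ))
      simpa using tendsto_const_nhds.sub (this.div_atTop Real.tendsto_log_atTop)
    have hhi : Tendsto (fun t : ℝ => 2 + Real.log 2 / Real.log t) atTop (nhds 2) := by
      have := tendsto_const_nhds (x := Real.log 2) (f := atTop (α := ℝ))
      simpa using tendsto_const_nhds.add (this.div_atTop Real.tendsto_log_atTop)
    refine tendsto_of_tendsto_of_tendsto_of_le_of_le' hlo hhi ?_ ?_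
    · filter_upwards [eventually_ge_atTop (3:ℝ)] with t ht
      obtain ⟨hl, hu⟩ := L_bounds ht
      have hlt : 0 < Real.log t := Real.log_pos (by linarith)
      have hglb : 2 * Real.log t - Real.log 2 ≤ g t := by
        have h1 : Real.log (t ^ 2 / 2) ≤ g t :=
          Real.log_le_log (by positivity) hl
        rw [Real.log_div (by positivity) (by norm_num), Real.log_pow] at h1
        push_cast at h1; linarith
      rw [show (2:ℝ) - Real.log 2 / Real.log t
        = (2 * Real.log t - Real.log 2) / Real.log t by field_simp]
      exact (div_le_div_iff_of_pos_right hlt).mpr hglb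
    · filter_upwards [eventually_ge_atTop (3:ℝ)] with t ht
      obtain ⟨hl, hu⟩ := L_bounds ht
      have hlt : 0 < Real.log t := Real.log_pos (by linarith)
      have hLpos : 0 < L t := lt_of_lt_of_le (by positivity) hl
      have hgub : g t ≤ Real.log 2 + 2 * Real.log t := by
        have h1 : g t ≤ Real.log (2 * t ^ 2) := Real.log_le_log hLpos hu
        rw [Real.log_mul (by norm_num) (by positivity), Real.log_pow] at h1
        push_cast at h1; linarith
      rw [show (2:ℝ) + Real.log 2 / Real.log t
        = (Real.log 2 + 2 * Real.log t) / Real.log t by field_simp; ring]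
      exact (div_le_div_iff_of_pos_right hlt).mpr hgub
  -- f / log → 1
  have hf1 : Tendsto (fun t => f t / Real.log t) atTop (nhds 1) := by
    have ht2 : Tendsto (fun t : ℝ => (t ^ 2)⁻¹ + 1) atTop (nhds 1) := by
      simpa using ((tendsto_pow_atTop (two_ne_zero)).inv_tendsto_atTop).add
        (tendsto_const_nhds (x := (1:ℝ)))
    have hlog1 : Tendsto (fun t : ℝ => Real.log ((t ^ 2)⁻¹ + 1)) atTop (nhds 0) := by
      have := (Real.continuousAt_log (x := 1) (by norm_num)).tendsto.comp ht2
      simpa [Function.comp_def] using this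
    have h0 : Tendsto (fun t : ℝ => Real.log ((t ^ 2)⁻¹ + 1) / Real.log t) atTop (nhds 0) :=
      hlog1.div_atTop Real.tendsto_log_atTop
    have hM : Tendsto (fun t : ℝ => 1 + (1/2) * (Real.log ((t ^ 2)⁻¹ + 1) / Real.log t))
        atTop (nhds 1) := by
      simpa using tendsto_const_nhds.add (h0.const_mul (1/2 : ℝ))
    refine hM.congr' ?_
    filter_upwards [eventually_ge_atTop (3:ℝ)] with t ht
    have hlt : Real.log t ≠ 0 := ne_of_gt (Real.log_pos (by linarith))
    have ht0 : (0:ℝ) < t := by linarith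
    have hsplit : Real.log (1 + t ^ 2) = 2 * Real.log t + Real.log ((t ^ 2)⁻¹ + 1) := by
      rw [show (1:ℝ) + t ^ 2 = t ^ 2 * ((t ^ 2)⁻¹ + 1) by field_simp,
        Real.log_mul (by positivity) (by positivity), Real.log_pow]
      push_cast; ring
    show 1 + 1 / 2 * (Real.log ((t ^ 2)⁻¹ + 1) / Real.log t)
        = (1 / 2 * Real.log (1 + t ^ 2)) / Real.log t
    rw [hsplit]
    field_simp
  -- combine
  have hfinal : Tendsto (fun t => (f t / Real.log t) / (g t / Real.log t)) atTop
      (nhds (1 / 2)) := by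
    simpa [Pi.div_def] using hf1.div hg2 (by norm_num)
  refine hfinal.congr' ?_
  filter_upwards [eventually_ge_atTop (3:ℝ)] with t ht
  have hlt : 0 < Real.log t := Real.log_pos (by linarith)
  obtain ⟨hl, hu⟩ := L_bounds ht
  have hl3 : (1:ℝ) ≤ Real.log t := by
    rw [Real.le_log_iff_exp_le (by linarith)]
    calc rexp 1 ≤ 2.7182818286 := Real.exp_one_lt_d9.le
      _ ≤ 3 := by norm_num
      _ ≤ t := ht
  have hlog2 : Real.log 2 ≤ 1 := by
    calc Real.log 2 ≤ 2 - 1 := Real.log_le_sub_one_of_pos (by norm_num)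
      _ = 1 := by norm_num
  have hgpos : 0 < g t := by
    have h1 : Real.log (t ^ 2 / 2) ≤ g t := Real.log_le_log (by positivity) hl
    rw [Real.log_div (by positivity) (by norm_num), Real.log_pow] at h1
    push_cast at h1; linarith
  have hg0 : g t ≠ 0 := ne_of_gt hgpos
  have hlt0 : Real.log t ≠ 0 := ne_of_gt hlt
  show f t / Real.log t / (g t / Real.log t) = f t / g t
  field_simp
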